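/- Let d be a positive integer, a an integer with gcd(a, d) = 1, and r | d. Define K_{r,d}(m) = (1/d)·Σ*_{α mod d} e(−aα/d)·S(±m, α^{-1}; d/r), where S denotes the Kloosterman sum and Σ* is over α coprime to d. Write d = d₀·d₁ with d₀ squarefree, d₁ squarefull, gcd(d₀, d₁) = 1. Then K_{r,d}(m) = 0 unless r | d₀, in which case K_{r,d}(m) = (μ(r)/d)·Σ*_{α mod d/r} e(−\overline{r}·a·α/(d/r))·S(±m, α^{-1}; d/r), where \overline{r} is an inverse of r modulo d/r. -/

import Mathlib

open Finset

/-- The Kloosterman sum `S(m, n; q)`, realized as a sum over pairs `(x, y)` with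
`x·y ≡ 1 (mod q)`. -/
noncomputable def kloosterman (m n : ℤ) (q : ℕ) : ℂ :=
  ∑ x ∈ (Finset.range q ×ˢ Finset.range q).filter (fun x => x.1 * x.2 % q = 1 % q),
    Complex.exp (2 * Real.pi * Complex.I * (((m : ℂ) * x.1 + (n : ℂ) * x.2) / q))

/-- `K_{r,d}(m) = (1/d)·Σ*_{α mod d} e(−aα/d)·S(εm, α⁻¹; d/r)`, realized as a sum over
pairs `(α, β)` with `α·β ≡ 1 (mod d)` (so `β = α⁻¹`). -/
noncomputable def Krd (a m ε : ℤ) (r d : ℕ) : ℂ :=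
  (1 / d) *
    ∑ ab ∈ (Finset.range d ×ˢ Finset.range d).filter (fun ab => ab.1 * ab.2 % d = 1 % d),
      Complex.exp (2 * Real.pi * Complex.I * (-((a : ℂ) * ab.1) / d)) *
        kloosterman (ε * m) ab.2 (d / r)

noncomputable def ec (q : ℕ) (k : ℤ) : ℂ := Complex.exp (2 * Real.pi * Complex.I * k / q)

lemma ec_add (q : ℕ) (k l : ℤ) : ec q (k + l) = ec q k * ec q l := by
  rw [ec, ec, ec, ← Complex.exp_add]
  congr 1
  push_cast
  ring

lemma ec_dvd_sub {q : ℕ} (hq : q ≠ 0) {k l : ℤ} (h : (q:ℤ) ∣ k - l) : ec q k = ec q l := by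
  obtain ⟨m, hm⟩ := h
  have hk : k = l + q * m := by linarith
  rw [hk, ec_add]
  have : ec q ((q:ℤ) * m) = 1 := by
    rw [ec]
    have hq' : (q:ℂ) ≠ 0 := Nat.cast_ne_zero.mpr hq
    have : 2 * (Real.pi:ℂ) * Complex.I * ((q:ℤ) * m : ℤ) / q = (m:ℤ) * (2 * Real.pi * Complex.I) := by
      push_cast
      field_simp
    rw [this, Complex.exp_int_mul_two_pi_mul_I]
  rw [this, mul_one]

lemma ec_eq_one_iff {q : ℕ} (hq : q ≠ 0) {k : ℤ} : ec q k = 1 ↔ (q:ℤ) ∣ k := by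
  constructor
  · intro h
    rw [ec, Complex.exp_eq_one_iff] at h
    obtain ⟨n, hn⟩ := h
    have hq' : (q:ℂ) ≠ 0 := Nat.cast_ne_zero.mpr hq
    have h2 : (2 * (Real.pi:ℂ) * Complex.I) ≠ 0 := by
      simp [Real.pi_ne_zero, Complex.I_ne_zero, Complex.ofReal_ne_zero]
    have : (k:ℂ) = (n:ℂ) * q := by
      field_simp at hn
      have := hn
      -- hn : 2 * π * I * k = n * (2 * π * I) * q
      apply mul_left_cancel₀ h2
      linear_combination (2 * (Real.pi:ℂ) * Complex.I) * this
    exact ⟨n, by exact_mod_cast this.trans (mul_comm _ _)⟩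
  · intro h
    have : ec q k = ec q 0 := ec_dvd_sub hq (by simpa using h)
    simpa [ec] using this

lemma ec_pow (q : ℕ) (b : ℤ) (u : ℕ) : ec q (b * u) = (ec q b) ^ u := by
  rw [ec, ec, ← Complex.exp_nat_mul]
  congr 1
  push_cast
  ring

lemma ec_geom (R : ℕ) (hR : R ≠ 0) (b : ℤ) :
    ∑ u ∈ range R, ec R (b * u) = if (R:ℤ) ∣ b then (R:ℂ) else 0 := by
  by_cases h : (R:ℤ) ∣ b
  · simp only [h, if_true]
    rw [show ∑ u ∈ range R, ec R (b * (u:ℕ)) = ∑ _u ∈ range R, (1:ℂ) from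
      Finset.sum_congr rfl (fun u _ => (ec_eq_one_iff hR).mpr (Dvd.dvd.mul_right h u)),
      Finset.sum_const, card_range, nsmul_eq_mul, mul_one]
  · simp only [h, if_false]
    have hne : ec R b ≠ 1 := fun hc => h ((ec_eq_one_iff hR).mp hc)
    simp_rw [ec_pow]
    rw [geom_sum_eq hne]
    have : ec R b ^ R = 1 := by
      rw [← ec_pow]
      exact (ec_eq_one_iff hR).mpr ⟨b, by ring⟩
    rw [this]
    simp

lemma ec_nested (c s : ℕ) (hs : s ≠ 0) (k : ℤ) : ec (c * s) (s * k) = ec c k := by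
  rcases Nat.eq_zero_or_pos c with hc | hc
  · subst hc; simp [ec]
  · rw [ec, ec]
    congr 1
    have hc' : (c:ℂ) ≠ 0 := Nat.cast_ne_zero.mpr hc.ne'
    have hs' : (s:ℂ) ≠ 0 := Nat.cast_ne_zero.mpr hs
    push_cast
    field_simp

lemma kl_congr (m : ℤ) {q : ℕ} (hq : q ≠ 0) {n n' : ℤ} (h : (q:ℤ) ∣ n - n') :
    kloosterman m n q = kloosterman m n' q := by
  unfold kloosterman
  refine Finset.sum_congr rfl (fun x _ => ?_)
  have e1 : ∀ w : ℤ, Complex.exp (2 * Real.pi * Complex.I * (((m : ℂ) * x.1 + (w : ℂ) * x.2) / q))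
      = ec q (m * x.1 + w * x.2) := by
    intro w
    rw [ec]
    congr 1
    push_cast
    ring
  rw [e1 n, e1 n', ec_dvd_sub hq]
  have : m * (x.1:ℤ) + n * x.2 - (m * x.1 + n' * x.2) = (n - n') * x.2 := by ring
  rw [this]
  exact Dvd.dvd.mul_right h _

lemma mem_F {q : ℕ} {p : ℕ × ℕ}
    (hp : p ∈ (Finset.range q ×ˢ Finset.range q).filter (fun x => x.1 * x.2 % q = 1 % q)) :
    p.1 < q ∧ p.2 < q ∧ p.1 * p.2 ≡ 1 [MOD q] := by
  simp only [Finset.mem_filter, Finset.mem_product, Finset.mem_range] at hp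
  exact ⟨hp.1.1, hp.1.2, hp.2⟩

lemma coprime_of_modeq {q α β : ℕ} (h : α * β ≡ 1 [MOD q]) : Nat.Coprime α q := by
  have hd : (q:ℤ) ∣ 1 - (α:ℤ) * β := by
    have := (Nat.modEq_iff_dvd (n := q) (a := α * β) (b := 1)).mp h
    push_cast at this
    exact this
  have hg : (Nat.gcd α q : ℤ) ∣ 1 := by
    have h1 : (Nat.gcd α q : ℤ) ∣ (α:ℤ) := Int.natCast_dvd_natCast.mpr (Nat.gcd_dvd_left _ _)
    have h2 : (Nat.gcd α q : ℤ) ∣ (q:ℤ) := Int.natCast_dvd_natCast.mpr (Nat.gcd_dvd_right _ _)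
    have : (Nat.gcd α q : ℤ) ∣ 1 - (α:ℤ) * β := h2.trans hd
    have h4 : (Nat.gcd α q : ℤ) ∣ (α:ℤ) * β := h1.mul_right _
    simpa using dvd_add this h4
  exact Nat.eq_one_of_dvd_one (by exact_mod_cast hg)

open ArithmeticFunction in
lemma musum (m : ℕ) :
    (∑ s ∈ m.divisors, (ArithmeticFunction.moebius s : ℤ)) = if m = 1 then 1 else 0 := by
  have h := ArithmeticFunction.coe_mul_zeta_apply (f := (ArithmeticFunction.moebius)) (x := m)
  rw [ArithmeticFunction.moebius_mul_coe_zeta] at h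
  rw [← h, ArithmeticFunction.one_apply]

lemma divisors_gcd_eq (n d : ℕ) (hd : d ≠ 0) :
    (Nat.gcd n d).divisors = d.divisors.filter (· ∣ n) := by
  ext s
  simp only [Nat.mem_divisors, Finset.mem_filter, Nat.dvd_gcd_iff]
  constructor
  · rintro ⟨⟨h1, h2⟩, -⟩
    exact ⟨⟨h2, hd⟩, h1⟩
  · rintro ⟨⟨h2, -⟩, h1⟩
    exact ⟨⟨h1, h2⟩, fun hc => hd (by simpa [hc] using Nat.gcd_dvd_right n d)⟩

lemma squarefree_dvd_of_prime_dvd {r m : ℕ} (hr : Squarefree r)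
    (h : ∀ p : ℕ, p.Prime → p ∣ r → p ∣ m) : r ∣ m := by
  have := Nat.prod_primeFactors_of_squarefree hr
  rw [← this]
  exact Finset.prod_primes_dvd m
    (fun p hp => (Nat.prime_of_mem_primeFactors hp).prime)
    (fun p hp => h p (Nat.prime_of_mem_primeFactors hp) (Nat.dvd_of_mem_primeFactors hp))

/-- the characterization: r ∣ d₀ iff r squarefree and coprime to c = d/r -/
lemma rdvd_iff {d r d₀ d₁ : ℕ} (hd : 0 < d) (hr : r ∣ d) (hsplit : d = d₀ * d₁)
    (hsf : Squarefree d₀) (hfull : ∀ q : ℕ, q.Prime → q ∣ d₁ → q ^ 2 ∣ d₁)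
    (hcop : Nat.Coprime d₀ d₁) :
    r ∣ d₀ ↔ Squarefree r ∧ Nat.Coprime r (d / r) := by
  have hr0 : 0 < r := Nat.pos_of_dvd_of_pos hr hd
  have hc0 : 0 < d / r := Nat.div_pos (Nat.le_of_dvd hd hr) hr0
  have hcr : d / r * r = d := Nat.div_mul_cancel hr
  constructor
  · intro hrd₀
    obtain ⟨e, he⟩ := hrd₀
    have hsr : Squarefree r := hsf.squarefree_of_dvd ⟨e, he⟩
    refine ⟨hsr, ?_⟩
    have hre : Nat.Coprime r e := by
      have := hsf
      rw [he, Nat.squarefree_mul_iff] at this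
      exact this.1
    have hrd₁ : Nat.Coprime r d₁ := Nat.Coprime.coprime_dvd_left ⟨e, he⟩ hcop
    have hce : d / r = e * d₁ := by
      have : (d / r) * r = (e * d₁) * r := by rw [hcr, hsplit, he]; ring
      exact Nat.eq_of_mul_eq_mul_right hr0 this
    rw [hce]
    exact Nat.Coprime.mul_right hre hrd₁
  · rintro ⟨hsr, hcop'⟩
    refine squarefree_dvd_of_prime_dvd hsr (fun p hp hpr => ?_)
    have hpd : p ∣ d := hpr.trans hr
    rw [hsplit] at hpd
    rcases (Nat.Prime.dvd_mul hp).mp hpd with h0 | h1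
    · exact h0
    · exfalso
      have hp2 : p ^ 2 ∣ d₁ := hfull p hp h1
      have hpc : ¬ p ∣ d / r := fun hpc =>
        Nat.Prime.one_lt hp |>.ne' (Nat.eq_one_of_dvd_coprimes hcop' hpr hpc)
      -- p^2 ∣ d = (d/r) * r with p ∤ d/r gives p^2 ∣ r, contradiction with squarefree
      have hpd2 : p ^ 2 ∣ d := hp2.trans ⟨d₀, by rw [hsplit]; ring⟩
      have hcpc : Nat.Coprime (p ^ 2) (d / r) := 
        (Nat.Prime.coprime_iff_not_dvd hp).mpr hpc |>.pow_left 2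
      have : p ^ 2 ∣ r := Nat.Coprime.dvd_of_dvd_mul_left hcpc (by rw [hcr]; exact hpd2)
      exact (Nat.squarefree_iff_prime_squarefree.mp hsr) p hp (by simpa [pow_two] using this)

lemma fiber (c r : ℕ) (hc : 0 < c) (hr : 0 < r) (f : ℕ → ℕ → ℂ)
    (hf : ∀ α β β', β ≡ β' [MOD c] → f α β = f α β') :
    ∑ p ∈ (range (c*r) ×ˢ range (c*r)).filter (fun x => x.1 * x.2 % (c*r) = 1 % (c*r)), f p.1 p.2
      = ∑ p ∈ (range c ×ˢ range c).filter (fun x => x.1 * x.2 % c = 1 % c),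
          ∑ t ∈ range r, if Nat.gcd (p.1 + c * t) (c*r) = 1 then f (p.1 + c * t) p.2 else 0 := by
  have hq : c * r ≠ 0 := Nat.mul_ne_zero hc.ne' hr.ne'
  haveI : NeZero (c * r) := ⟨hq⟩
  -- convert RHS inner sums to filtered sums, then to a sigma set
  have step1 : ∀ p : ℕ × ℕ,
      (∑ t ∈ range r, if Nat.gcd (p.1 + c * t) (c*r) = 1 then f (p.1 + c * t) p.2 else 0)
      = ∑ t ∈ (range r).filter (fun t => Nat.gcd (p.1 + c * t) (c*r) = 1), f (p.1 + c * t) p.2 :=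
    fun p => (Finset.sum_filter _ _).symm
  simp_rw [step1]
  rw [Finset.sum_sigma ((range c ×ˢ range c).filter (fun x => x.1 * x.2 % c = 1 % c))
    (fun p => (range r).filter (fun t => Nat.gcd (p.1 + c * t) (c*r) = 1))
    (fun x => f (x.1.1 + c * x.2) x.1.2) |>.symm] 
  refine Finset.sum_bij' (fun p _ => ⟨(p.1 % c, p.2 % c), p.1 / c⟩)
    (fun x _ => (x.1.1 + c * x.2, ((((x.1.1 + c * x.2 : ℕ)) : ZMod (c*r))⁻¹).val))
    ?_ ?_ ?_ ?_ ?_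
  · -- forward membership
    rintro ⟨α, β⟩ hp
    obtain ⟨h1, h2, h3⟩ := mem_F hp
    have hmodc : α % c * (β % c) ≡ 1 [MOD c] := by
      calc α % c * (β % c) ≡ α * β [MOD c] := Nat.ModEq.mul (Nat.mod_modEq α c) (Nat.mod_modEq β c)
        _ ≡ 1 [MOD c] := Nat.ModEq.of_dvd (Dvd.intro r rfl) h3
    simp only [Finset.mem_sigma, Finset.mem_filter, Finset.mem_product, Finset.mem_range]
    refine ⟨⟨⟨Nat.mod_lt _ hc, Nat.mod_lt _ hc⟩, hmodc⟩, ?_, ?_⟩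
    · exact Nat.div_lt_of_lt_mul h1
    · rw [Nat.mod_add_div α c]
      exact coprime_of_modeq h3
  · -- backward membership
    rintro ⟨⟨α', β'⟩, t⟩ hx
    simp only [Finset.mem_sigma, Finset.mem_filter, Finset.mem_product, Finset.mem_range] at hx
    obtain ⟨⟨⟨hα, hβ⟩, hmul⟩, ht, hg⟩ := hx
    have hn : α' + c * t < c * r := by
      calc α' + c * t < c + c * t := by omega
        _ = c * (1 + t) := by ring
        _ ≤ c * r := Nat.mul_le_mul_left c (by omega)
    simp only [Finset.mem_filter, Finset.mem_product, Finset.mem_range]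
    refine ⟨⟨hn, ZMod.val_lt _⟩, ?_⟩
    have hone : ((α' + c * t : ℕ) : ZMod (c*r)) * ((α' + c * t : ℕ) : ZMod (c*r))⁻¹ = 1 :=
      ZMod.coe_mul_inv_eq_one _ hg
    have : (((α' + c * t) * ((((α' + c * t : ℕ)) : ZMod (c*r))⁻¹).val : ℕ) : ZMod (c*r))
        = ((1 : ℕ) : ZMod (c*r)) := by
      rw [Nat.cast_mul, ZMod.natCast_val, ZMod.cast_id, hone, Nat.cast_one]
    exact (ZMod.natCast_eq_natCast_iff _ _ _).mp this
  · -- left inverse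
    rintro ⟨α, β⟩ hp
    obtain ⟨h1, h2, h3⟩ := mem_F hp
    have hrecon : α % c + c * (α / c) = α := Nat.mod_add_div α c
    have hcast : ((α:ℕ) : ZMod (c*r)) * ((β:ℕ) : ZMod (c*r)) = 1 := by
      have := (ZMod.natCast_eq_natCast_iff (α*β) 1 (c*r)).mpr h3
      push_cast at this
      simpa using this
    have hinv : (((α:ℕ) : ZMod (c*r)))⁻¹ = ((β:ℕ) : ZMod (c*r)) := by
      have hu : IsUnit ((α:ℕ) : ZMod (c*r)) := IsUnit.of_mul_eq_one _ hcast
      rw [← mul_one (((α:ℕ) : ZMod (c*r)))⁻¹, ← hcast, ← mul_assoc,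
        ZMod.inv_mul_of_unit _ hu, one_mul]
    simp only [hrecon]
    rw [hinv]
    simp [ZMod.val_cast_of_lt h2]
  · -- right inverse
    rintro ⟨⟨α', β'⟩, t⟩ hx
    simp only [Finset.mem_sigma, Finset.mem_filter, Finset.mem_product, Finset.mem_range] at hx
    obtain ⟨⟨⟨hα, hβ⟩, hmul⟩, ht, hg⟩ := hx
    have e1 : (α' + c * t) % c = α' := by
      rw [Nat.add_mul_mod_self_left, Nat.mod_eq_of_lt hα]
    have e2 : (α' + c * t) / c = t := by
      rw [Nat.add_mul_div_left _ _ hc, Nat.div_eq_of_lt hα, zero_add]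
    set y := ((((α' + c * t : ℕ)) : ZMod (c*r))⁻¹).val with hy
    have hmody : y % c = β' := by
      -- α' * y ≡ 1 [MOD c] and α' * β' ≡ 1 [MOD c], cancel α'
      have hone : ((α' + c * t : ℕ) : ZMod (c*r)) * ((α' + c * t : ℕ) : ZMod (c*r))⁻¹ = 1 :=
        ZMod.coe_mul_inv_eq_one _ hg
      have hny : (α' + c * t) * y ≡ 1 [MOD c * r] := by
        refine (ZMod.natCast_eq_natCast_iff _ _ _).mp ?_
        rw [Nat.cast_mul, hy, ZMod.natCast_val, ZMod.cast_id, hone, Nat.cast_one]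
      have hnyc : α' * y ≡ 1 [MOD c] := by
        have h' : (α' + c * t) * y ≡ 1 [MOD c] := Nat.ModEq.of_dvd (Dvd.intro r rfl) hny
        calc α' * y ≡ (α' + c * t) * y [MOD c] := by
              refine Nat.ModEq.mul_right y ?_
              conv_lhs => rw [← Nat.add_zero α']
              exact Nat.ModEq.add_left α' ((Nat.modEq_zero_iff_dvd).mpr ⟨t, rfl⟩).symm
          _ ≡ 1 [MOD c] := h'
      have hαc : Nat.Coprime α' c := coprime_of_modeq hmul
      have : y ≡ β' [MOD c] := by
        refine Nat.ModEq.cancel_left_of_coprime (c := α') (by rwa [Nat.coprime_comm] at hαc) ?_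
        calc α' * y ≡ 1 [MOD c] := hnyc
          _ ≡ α' * β' [MOD c] := hmul.symm
      rw [Nat.ModEq] at this
      rwa [Nat.mod_eq_of_lt hβ] at this
    simp only
    rw [e1, e2, hmody]
  · -- values
    rintro ⟨α, β⟩ hp
    obtain ⟨h1, h2, h3⟩ := mem_F hp
    simp only [Nat.mod_add_div α c]
    exact hf α β (β % c) (Nat.mod_modEq β c).symm

lemma Wzero_noncop (c r s : ℕ) {α' : ℕ} (hα'c : Nat.Coprime α' c) (hs : ¬ Nat.Coprime s c)
    (F : ℕ → ℂ) :
    ∑ t ∈ range r, (if s ∣ (α' + c * t) then F t else 0) = 0 := by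
  refine Finset.sum_eq_zero (fun t _ => ?_)
  rw [if_neg]
  intro hdvd
  apply hs
  have hct : Nat.gcd s c ∣ c * t := (Nat.gcd_dvd_right s c).mul_right t
  have hsum : Nat.gcd s c ∣ α' + c * t := (Nat.gcd_dvd_left s c).trans hdvd
  have hg : Nat.gcd s c ∣ α' := by
    have := Nat.dvd_sub hsum hct
    simpa using this
  have hfin : Nat.gcd s c ∣ Nat.gcd α' c := Nat.dvd_gcd hg (Nat.gcd_dvd_right s c)
  rw [hα'c] at hfin
  exact Nat.eq_one_of_dvd_one hfin

lemma Wreindex (c s R : ℕ) (hc : 0 < c) (hs : 0 < s) (hsR : s ∣ R)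
    (α' : ℕ) (hcop : Nat.Coprime s c) (F : ℕ → ℂ) :
    ∑ t ∈ range R, (if s ∣ (α' + c * t) then F t else 0)
      = ∑ u ∈ range (R / s), F (((-(α' : ZMod s)) * (c : ZMod s)⁻¹).val + s * u) := by
  haveI : NeZero s := ⟨hs.ne'⟩
  set t₀ := ((-(α' : ZMod s)) * (c : ZMod s)⁻¹).val with ht₀
  have ht₀lt : t₀ < s := ZMod.val_lt _
  have hcu : IsUnit ((c : ℕ) : ZMod s) := (ZMod.isUnit_iff_coprime c s).mpr
    (Nat.coprime_comm.mp hcop)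
  -- characterization
  have ch : ∀ t : ℕ, s ∣ (α' + c * t) ↔ t % s = t₀ := by
    intro t
    rw [← ZMod.natCast_eq_zero_iff]
    push_cast
    constructor
    · intro h
      have hct : ((c:ℕ) : ZMod s) * t = -(α' : ZMod s) := by linear_combination h
      have : (t : ZMod s) = -(α' : ZMod s) * ((c:ℕ) : ZMod s)⁻¹ := by
        calc (t : ZMod s) = ((c : ZMod s)⁻¹ * (c : ZMod s)) * t := by
              rw [ZMod.inv_mul_of_unit _ hcu, one_mul]
          _ = (c : ZMod s)⁻¹ * ((c : ZMod s) * t) := by ring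
          _ = (c : ZMod s)⁻¹ * (-(α' : ZMod s)) := by rw [hct]
          _ = -(α' : ZMod s) * (c : ZMod s)⁻¹ := by ring
      have := congrArg ZMod.val this
      rwa [ZMod.val_natCast, ← ht₀] at this
    · intro h
      have : (t : ZMod s) = (t₀ : ZMod s) := by
        rw [← Nat.mod_add_div t s, h]
        push_cast
        simp [ZMod.natCast_self]
      rw [this]
      have hv : ((t₀ : ℕ) : ZMod s) = -(α' : ZMod s) * (c : ZMod s)⁻¹ := by
        rw [ht₀, ZMod.natCast_val, ZMod.cast_id]
      rw [hv]
      have hcc : ((c:ℕ) : ZMod s) * ((c : ZMod s)⁻¹) = 1 := ZMod.mul_inv_of_unit _ hcu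
      linear_combination (-(α' : ZMod s)) * hcc
  simp_rw [ch]
  rw [← Finset.sum_filter]
  refine Finset.sum_bij' (fun t _ => t / s) (fun u _ => t₀ + s * u) ?_ ?_ ?_ ?_ ?_
  · intro t ht
    simp only [Finset.mem_filter, Finset.mem_range] at ht
    exact Finset.mem_range.mpr (Nat.div_lt_div_of_lt_of_dvd hsR ht.1)
  · intro u hu
    simp only [Finset.mem_range] at hu
    simp only [Finset.mem_filter, Finset.mem_range]
    constructor
    · calc t₀ + s * u < s + s * u := by omega
        _ = s * (1 + u) := by ring
        _ ≤ s * (R / s) := Nat.mul_le_mul_left s (by omega)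
        _ = R := Nat.mul_div_cancel' hsR
    · rw [Nat.add_mul_mod_self_left, Nat.mod_eq_of_lt ht₀lt]
  · intro t ht
    simp only [Finset.mem_filter, Finset.mem_range] at ht
    show t₀ + s * (t / s) = t
    rw [← ht.2]
    exact Nat.mod_add_div t s
  · intro u hu
    show (t₀ + s * u) / s = u
    rw [Nat.add_mul_div_left _ _ hs, Nat.div_eq_of_lt ht₀lt, zero_add]
  · intro t ht
    simp only [Finset.mem_filter, Finset.mem_range] at ht
    have h' : t₀ + s * (t / s) = t := by rw [← ht.2]; exact Nat.mod_add_div t s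
    show F t = F (t₀ + s * (t / s))
    rw [h']

lemma Texpand (c r : ℕ) (hc : 0 < c) (hr : 0 < r) (α' : ℕ) (F : ℕ → ℂ) :
    ∑ t ∈ range r, (if Nat.gcd (α' + c * t) (c * r) = 1 then F t else 0)
      = ∑ s ∈ (c * r).divisors,
          ((ArithmeticFunction.moebius s : ℤ) : ℂ) *
            ∑ t ∈ range r, (if s ∣ (α' + c * t) then F t else 0) := by
  have hq : c * r ≠ 0 := Nat.mul_ne_zero hc.ne' hr.ne'
  have step1 : ∀ t : ℕ, (if Nat.gcd (α' + c * t) (c * r) = 1 then F t else 0)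
      = ∑ s ∈ (c * r).divisors, (if s ∣ (α' + c * t) then ((ArithmeticFunction.moebius s : ℤ) : ℂ) * F t else 0) := by
    intro t
    rw [← Finset.sum_filter, ← divisors_gcd_eq _ _ hq]
    rw [← Finset.sum_mul]
    rw [show ∑ s ∈ (Nat.gcd (α' + c * t) (c*r)).divisors, ((ArithmeticFunction.moebius s : ℤ) : ℂ)
      = (((∑ s ∈ (Nat.gcd (α' + c * t) (c*r)).divisors, (ArithmeticFunction.moebius s : ℤ)) : ℤ) : ℂ) by push_cast; ring]
    rw [musum]
    by_cases h : Nat.gcd (α' + c * t) (c * r) = 1 <;> simp [h]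
  simp_rw [step1]
  rw [Finset.sum_comm]
  refine Finset.sum_congr rfl (fun s _ => ?_)
  rw [Finset.mul_sum]
  refine Finset.sum_congr rfl (fun t _ => ?_)
  rw [mul_ite, mul_zero]

lemma Wvalue (c r s : ℕ) (hc : 0 < c) (hr : 0 < r) (hs : s ∣ r) (hs0 : 0 < s)
    (hcop : Nat.Coprime s c) (a : ℤ) (α' : ℕ) :
    ∑ t ∈ range r, (if s ∣ (α' + c * t) then ec (c * r) (-(a * (α' + c * t))) else 0)
      = ec (c * r) (-(a * (α' + c * ((-(α' : ZMod s)) * (c : ZMod s)⁻¹).val)))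
          * (if ((r / s : ℕ) : ℤ) ∣ (-a) then ((r / s : ℕ) : ℂ) else 0) := by
  rw [Wreindex c s r hc hs0 hs α' hcop]
  set t₀ := ((-(α' : ZMod s)) * (c : ZMod s)⁻¹).val with ht₀
  have hrs0 : r / s ≠ 0 := (Nat.div_pos (Nat.le_of_dvd hr hs) hs0).ne'
  have expand : ∀ u : ℕ, ec (c * r) (-(a * (α' + c * (t₀ + s * u))))
      = ec (c * r) (-(a * (α' + c * t₀))) * ec (r / s) ((-a) * u) := by
    intro u
    have h1 : -(a * ((α' : ℤ) + c * (t₀ + s * u)))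
        = -(a * (α' + c * t₀)) + ((c * s : ℕ) : ℤ) * ((-a) * u) := by push_cast; ring
    have h1' : (((α' + c * (t₀ + s * u) : ℕ)) : ℤ) = (α' : ℤ) + c * (t₀ + s * u) := by push_cast; ring
    rw [h1, ec_add]
    congr 1
    have h2 : c * r = (r / s) * (c * s) := by
      conv_lhs => rw [← Nat.mul_div_cancel' hs]
      ring
    rw [h2]
    exact ec_nested _ _ (Nat.mul_ne_zero hc.ne' hs0.ne') _
  calc ∑ u ∈ range (r / s), ec (c * r) (-(a * (α' + c * (t₀ + s * u))))
      = ∑ u ∈ range (r / s), ec (c * r) (-(a * (α' + c * t₀))) * ec (r / s) ((-a) * u) := by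
        refine Finset.sum_congr rfl (fun u _ => ?_)
        exact_mod_cast expand u
    _ = ec (c * r) (-(a * (α' + c * t₀))) * ∑ u ∈ range (r / s), ec (r / s) ((-a) * u) := by
        rw [Finset.mul_sum]
    _ = _ := by rw [ec_geom _ hrs0]

lemma div_one_case {s r : ℕ} (hs : s ∣ r) (hr : 0 < r) (h1 : r / s = 1) : s = r := by
  have := Nat.mul_div_cancel' hs
  rw [h1, mul_one] at this
  exact this

lemma rs_not_dvd {c r s : ℕ} (hc : 0 < c) (hr : 0 < r) (hs : s ∣ r) (hsr : s ≠ r)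
    {a : ℤ} (ha : Int.gcd a ((c * r : ℕ) : ℤ) = 1) : ¬ ((r / s : ℕ) : ℤ) ∣ (-a) := by
  intro hdvd
  have h1 : ((r / s : ℕ) : ℤ) ∣ a := (dvd_neg.mp hdvd)
  have h2 : (r / s : ℕ) ∣ c * r := ((Nat.div_dvd_of_dvd hs).mul_left c)
  have h3 : ((r / s : ℕ) : ℤ) ∣ ((c * r : ℕ) : ℤ) := Int.natCast_dvd_natCast.mpr h2
  have h4 : ((r / s : ℕ) : ℤ) ∣ (Int.gcd a ((c * r : ℕ) : ℤ) : ℤ) := Int.dvd_coe_gcd h1 h3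
  rw [ha] at h4
  have h5 : (r / s) ∣ 1 := by exact_mod_cast h4
  exact hsr (div_one_case hs hr (Nat.eq_one_of_dvd_one h5))

lemma Tlemma (c r : ℕ) (hc : 0 < c) (hr : 0 < r) (a : ℤ)
    (ha : Int.gcd a ((c * r : ℕ) : ℤ) = 1) (α' : ℕ) (hα'c : Nat.Coprime α' c) :
    (¬(Squarefree r ∧ Nat.Coprime r c) →
      (∑ t ∈ range r, if Nat.gcd (α' + c * t) (c * r) = 1
        then ec (c * r) (-(a * (α' + c * t))) else 0) = 0)
    ∧ ((Squarefree r ∧ Nat.Coprime r c) → ∀ rb : ℤ, (r : ℤ) * rb ≡ 1 [ZMOD (c : ℤ)] →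
      (∑ t ∈ range r, if Nat.gcd (α' + c * t) (c * r) = 1
        then ec (c * r) (-(a * (α' + c * t))) else 0)
        = ((ArithmeticFunction.moebius r : ℤ) : ℂ) * ec c (-(rb * a * α'))) := by
  have hq : c * r ≠ 0 := Nat.mul_ne_zero hc.ne' hr.ne'
  have hT := Texpand c r hc hr α' (fun t => ec (c * r) (-(a * (α' + c * t))))
  -- a helper for vanishing of terms
  have hvanish : ∀ s ∈ (c * r).divisors, (s ≠ r ∨ ¬(Squarefree r ∧ Nat.Coprime r c)) →
      ((ArithmeticFunction.moebius s : ℤ) : ℂ) *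
        ∑ t ∈ range r, (if s ∣ (α' + c * t) then ec (c * r) (-(a * (α' + c * t))) else 0) = 0 := by
    intro s hsmem hcase
    rw [Nat.mem_divisors] at hsmem
    have hs0 : 0 < s := Nat.pos_of_ne_zero (fun h => hq (by
      subst h; exact Nat.eq_zero_of_zero_dvd hsmem.1))
    by_cases hsq : Squarefree s
    · by_cases hscop : Nat.Coprime s c
      · -- then s ∣ r and s ≠ r, use Wvalue and rs_not_dvd
        have hsr : s ∣ r := hscop.dvd_of_dvd_mul_left hsmem.1
        have hsne : s ≠ r := by
          rcases hcase with h | h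
          · exact h
          · intro hsreq; subst hsreq; exact h ⟨hsq, hscop⟩
        rw [Wvalue c r s hc hr hsr hs0 hscop a α']
        rw [if_neg (rs_not_dvd hc hr hsr hsne ha)]
        ring
      · rw [Wzero_noncop c r s hα'c hscop]
        ring
    · rw [ArithmeticFunction.moebius_eq_zero_of_not_squarefree hsq]
      norm_num
  constructor
  · intro hcase
    rw [hT]
    exact Finset.sum_eq_zero (fun s hs => hvanish s hs (Or.inr hcase))
  · rintro ⟨hsqr, hrc⟩ rb hrb
    rw [hT]
    rw [Finset.sum_eq_single_of_mem r (Nat.mem_divisors.mpr ⟨dvd_mul_left r c, hq⟩)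
      (fun s hs hne => hvanish s hs (Or.inl hne))]
    rw [Wvalue c r r hc hr dvd_rfl hr hrc a α']
    rw [Nat.div_self hr]
    simp only [Nat.cast_one, one_dvd, if_true, mul_one]
    congr 1
    -- r divides α' + c * t₀
    haveI : NeZero r := ⟨hr.ne'⟩
    set t₀ := ((-(α' : ZMod r)) * (c : ZMod r)⁻¹).val with ht₀
    have hcu : IsUnit ((c : ℕ) : ZMod r) := (ZMod.isUnit_iff_coprime c r).mpr
      (Nat.coprime_comm.mp hrc)
    have hdvd : r ∣ α' + c * t₀ := by
      rw [← ZMod.natCast_eq_zero_iff]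
      push_cast
      have hv : ((t₀ : ℕ) : ZMod r) = -(α' : ZMod r) * (c : ZMod r)⁻¹ := by
        rw [ht₀, ZMod.natCast_val, ZMod.cast_id]
      rw [hv]
      have hcc : ((c : ℕ) : ZMod r) * ((c : ZMod r)⁻¹) = 1 := ZMod.mul_inv_of_unit _ hcu
      linear_combination (-(α' : ZMod r)) * hcc
    set k := (α' + c * t₀) / r with hk
    have hkz : (r : ℤ) * k = (α' : ℤ) + c * t₀ := by
      have := Nat.mul_div_cancel' hdvd
      exact_mod_cast congrArg (Nat.cast : ℕ → ℤ) this
    have e1 : ec (c * r) (-(a * ((α' : ℤ) + c * t₀))) = ec (c * r) ((r : ℤ) * (-(a * k))) := by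
      congr 1
      rw [← hkz]; ring
    rw [e1, ec_nested c r hr.ne']
    apply ec_dvd_sub hc.ne'
    have hdw : (c : ℤ) ∣ (r : ℤ) * rb - 1 := dvd_sub_comm.mp (Int.ModEq.dvd hrb)
    obtain ⟨w, hw⟩ := hdw
    refine ⟨a * (w * k - rb * t₀), ?_⟩
    linear_combination (-(a * rb)) * hkz + a * (k : ℤ) * hw

lemma bridge (a m ε : ℤ) (c r : ℕ) (hc : 0 < c) (hr : 0 < r) :
    Krd a m ε r (c * r) = (1 / ((c * r : ℕ) : ℂ)) *
      ∑ p ∈ (range c ×ˢ range c).filter (fun x => x.1 * x.2 % c = 1 % c),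
        (∑ t ∈ range r, if Nat.gcd (p.1 + c * t) (c * r) = 1
            then ec (c * r) (-(a * (p.1 + c * t))) else 0) * kloosterman (ε * m) p.2 c := by
  have hcr : (c * r) / r = c := Nat.mul_div_cancel hr (m := c)
  simp only [Krd, hcr]
  congr 1
  have hf : ∀ α β β' : ℕ, β ≡ β' [MOD c] →
      (fun α β : ℕ => ec (c * r) (-(a * α)) * kloosterman (ε * m) β c) α β
        = (fun α β : ℕ => ec (c * r) (-(a * α)) * kloosterman (ε * m) β c) α β' := by
    intro α β β' hββ'
    simp only
    congr 1
    refine kl_congr _ hc.ne' ?_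
    exact dvd_sub_comm.mp (Nat.modEq_iff_dvd.mp hββ')
  have fib := fiber c r hc hr (fun α β : ℕ => ec (c * r) (-(a * α)) * kloosterman (ε * m) β c) hf
  refine Eq.trans ?_ (fib.trans ?_)
  · refine Finset.sum_congr rfl (fun ab _ => ?_)
    show _ = ec (c * r) (-(a * ab.1)) * kloosterman (ε * m) ab.2 c
    congr 1
    rw [ec]
    congr 1
    push_cast
    ring
  · refine Finset.sum_congr rfl (fun p hp => ?_)
    show (∑ t ∈ range r, if Nat.gcd (p.1 + c * t) (c * r) = 1
        then ec (c * r) (-(a * (p.1 + c * t))) * kloosterman (ε * m) p.2 c else 0) = _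
    rw [Finset.sum_mul]
    refine Finset.sum_congr rfl (fun t ht => ?_)
    rw [ite_mul, zero_mul]

/-- `K_{r,d}(m)` vanishes unless `r` divides the squarefree part `d₀` of `d`,
in which case it is given by the stated twisted sum to modulus `d/r`. -/
theorem stmt16 (a m ε : ℤ) (hε : ε = 1 ∨ ε = -1) (d r d₀ d₁ : ℕ) (hd : 0 < d)
    (ha : Int.gcd a d = 1) (hr : r ∣ d)
    (hsplit : d = d₀ * d₁) (hsf : Squarefree d₀)
    (hfull : ∀ q : ℕ, q.Prime → q ∣ d₁ → q ^ 2 ∣ d₁) (hcop : Nat.Coprime d₀ d₁) :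
    (¬ r ∣ d₀ → Krd a m ε r d = 0) ∧
    (r ∣ d₀ → ∀ rb : ℤ, (r : ℤ) * rb ≡ 1 [ZMOD ((d / r : ℕ) : ℤ)] →
      Krd a m ε r d =
        (((ArithmeticFunction.moebius r : ℤ) : ℂ) / d) *
          ∑ ab ∈ (Finset.range (d / r) ×ˢ Finset.range (d / r)).filter
              (fun ab => ab.1 * ab.2 % (d / r) = 1 % (d / r)),
            Complex.exp (2 * Real.pi * Complex.I *
                (-((rb : ℂ) * a * ab.1) / ((d / r : ℕ) : ℂ))) *
              kloosterman (ε * m) ab.2 (d / r)) := by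
  have hr0 : 0 < r := Nat.pos_of_dvd_of_pos hr hd
  have hc0 : 0 < d / r := Nat.div_pos (Nat.le_of_dvd hd hr) hr0
  have hiff0 := rdvd_iff hd hr hsplit hsf hfull hcop
  obtain ⟨c, hc1⟩ : ∃ c, d / r = c := ⟨d / r, rfl⟩
  have hd2 : d = c * r := by rw [← hc1, Nat.div_mul_cancel hr]
  have hc0' : 0 < c := hc1 ▸ hc0
  have ha' : Int.gcd a ((c * r : ℕ) : ℤ) = 1 := by rw [← hd2]; exact ha
  have hiff : r ∣ d₀ ↔ Squarefree r ∧ Nat.Coprime r c := by rwa [hc1] at hiff0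
  rw [hc1, hd2]
  rw [bridge a m ε c r hc0' hr0]
  constructor
  · intro hnd
    rw [Finset.sum_eq_zero (fun p hp => ?_), mul_zero]
    rw [(Tlemma c r hc0' hr0 a ha' p.1 (coprime_of_modeq (mem_F hp).2.2)).1
      (by rwa [hiff] at hnd), zero_mul]
  · intro hrd rb hrb
    have hsumeq : ∀ p ∈ (range c ×ˢ range c).filter (fun x => x.1 * x.2 % c = 1 % c),
        (∑ t ∈ range r, if Nat.gcd (p.1 + c * t) (c * r) = 1
            then ec (c * r) (-(a * (p.1 + c * t))) else 0) * kloosterman (ε * m) p.2 c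
          = (((ArithmeticFunction.moebius r : ℤ) : ℂ) * ec c (-(rb * a * p.1)))
              * kloosterman (ε * m) p.2 c := by
      intro p hp
      rw [(Tlemma c r hc0' hr0 a ha' p.1 (coprime_of_modeq (mem_F hp).2.2)).2
        (hiff.mp hrd) rb hrb]
    rw [Finset.sum_congr rfl hsumeq]
    have hexp : ∀ p : ℕ × ℕ,
        Complex.exp (2 * Real.pi * Complex.I * (-((rb : ℂ) * a * p.1) / ((c : ℕ) : ℂ)))
          = ec c (-(rb * a * p.1)) := by
      intro p
      rw [ec]
      congr 1
      push_cast
      ring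
    have hR : ∑ ab ∈ (range c ×ˢ range c).filter (fun x => x.1 * x.2 % c = 1 % c),
        Complex.exp (2 * Real.pi * Complex.I * (-((rb : ℂ) * a * ab.1) / ((c : ℕ) : ℂ)))
          * kloosterman (ε * m) ab.2 c
        = ∑ ab ∈ (range c ×ˢ range c).filter (fun x => x.1 * x.2 % c = 1 % c),
            ec c (-(rb * a * ab.1)) * kloosterman (ε * m) ab.2 c :=
      Finset.sum_congr rfl (fun p _ => by rw [hexp p])
    rw [hR]
    simp_rw [mul_assoc, ← Finset.mul_sum]
    ring
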